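/- Under the blanket assumptions, let (x,y) ∈ dom(Q), α > 0, and y⁺ := prox_{αg*}(y + αx). Then (x, y⁺) ∈ dom(Q), and for every real c ≥ Q(x,y) it holds that ζ(x) + (c/α)·‖y − y⁺‖₂² ≤ c·η(x, y⁺). -/

import Mathlib

open Filter Topology Set
open scoped RealInnerProductSpace Pointwise NNReal

noncomputable section

namespace Paper

variable {E : Type*} [NormedAddCommGroup E] [InnerProductSpace ℝ E]

/-- The effective domain of an extended-real-valued function. -/
def edom (φ : E → EReal) : Set E := {x | φ x ≠ ⊤}

/-- A function with values in `(-∞, +∞]` is proper if it is not identically `+∞`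
and never takes the value `-∞`. -/
def Proper (φ : E → EReal) : Prop := (∃ x, φ x ≠ ⊤) ∧ ∀ x, φ x ≠ ⊥

/-- The Fréchet subdifferential of `φ` at `x`. -/
def frSubdiff (φ : E → EReal) (x : E) : Set E :=
  {y | φ x ≠ ⊤ ∧ 0 ≤ Filter.liminf
      (fun z : E => (φ z - φ x - ((⟪y, z - x⟫ : ℝ) : EReal)) * ((‖z - x‖⁻¹ : ℝ) : EReal))
      (𝓝[≠] x)}

/-- The limiting (Mordukhovich) subdifferential of `φ` at `x`. -/
def limSubdiff (φ : E → EReal) (x : E) : Set E :=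
  {y | ∃ u v : ℕ → E,
      Tendsto u atTop (𝓝 x) ∧ Tendsto (fun k => φ (u k)) atTop (𝓝 (φ x)) ∧
      (∀ k, v k ∈ frSubdiff φ (u k)) ∧ Tendsto v atTop (𝓝 y)}

/-- The convex subdifferential of a real-valued function. -/
def cvxSubdiff (g : E → ℝ) (x : E) : Set E :=
  {y | ∀ z, g x + ⟪y, z - x⟫ ≤ g z}

/-- The convex subdifferential of an extended-real-valued function. -/
def cvxSubdiffE (φ : E → EReal) (x : E) : Set E :=
  {y | ∀ z, φ x + ((⟪y, z - x⟫ : ℝ) : EReal) ≤ φ z}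

/-- The Fenchel conjugate of an extended-real-valued function. -/
def fconjE (φ : E → EReal) : E → EReal :=
  fun y => ⨆ x : E, (((⟪x, y⟫ : ℝ) : EReal) - φ x)

/-- The Fenchel conjugate of a real-valued function. -/
def fconj (g : E → ℝ) : E → EReal := fconjE (fun x => ((g x : ℝ) : EReal))

/-- `φ` satisfies the calmness condition at `x` relative to `A`. -/
def CalmAt (φ : E → EReal) (x : E) (A : Set E) : Prop :=
  ∃ κ : ℝ, 0 < κ ∧ ∃ B ∈ 𝓝 x, ∀ u ∈ B ∩ A,
    φ u ≤ φ x + ((κ * ‖u - x‖ : ℝ) : EReal) ∧ φ x ≤ φ u + ((κ * ‖u - x‖ : ℝ) : EReal)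

/-- `φ` satisfies the calmness condition on `A`. -/
def CalmOn (φ : E → EReal) (A : Set E) : Prop := ∀ x ∈ A, CalmAt φ x A

/-- The Kurdyka–Łojasiewicz property of `φ` at `x`. -/
def KLAt (φ : E → EReal) (x : E) : Prop :=
  ∃ ε > (0 : ℝ), ∃ δ > (0 : ℝ), ∃ ϕ ϕ' : ℝ → ℝ,
    ϕ 0 = 0 ∧ ContinuousOn ϕ (Set.Ico 0 ε) ∧ ConcaveOn ℝ (Set.Ico 0 ε) ϕ ∧
    (∀ s ∈ Set.Ioo (0 : ℝ) ε, HasDerivAt ϕ (ϕ' s) s) ∧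
    ContinuousOn ϕ' (Set.Ioo 0 ε) ∧ (∀ s ∈ Set.Ioo (0 : ℝ) ε, 0 < ϕ' s) ∧
    ∀ z ∈ Metric.ball x δ, φ x < φ z → φ z < φ x + (ε : EReal) →
      1 ≤ ENNReal.ofReal (ϕ' ((φ z).toReal - (φ x).toReal)) *
        EMetric.infEdist (0 : E) (limSubdiff φ z)

/-- The KL property of `φ` at `x` with exponent `θ`. -/
def KLExpAt (φ : E → EReal) (x : E) (θ : ℝ) : Prop :=
  ∃ c > (0 : ℝ), ∃ ε > (0 : ℝ), ∃ δ > (0 : ℝ),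
    ∀ z ∈ Metric.ball x δ, φ x < φ z → φ z < φ x + (ε : EReal) →
      ENNReal.ofReal (c * ((φ z).toReal - (φ x).toReal) ^ θ) ≤
        EMetric.infEdist (0 : E) (limSubdiff φ z)

/-- The (possibly multivalued) proximity operator of `φ`. -/
def proxSet (φ : E → EReal) (u : E) : Set E :=
  {z | ∀ w, φ z + ((‖z - u‖ ^ 2 / 2 : ℝ) : EReal) ≤ φ w + ((‖w - u‖ ^ 2 / 2 : ℝ) : EReal)}

/-- A positive scaling of an extended-real-valued function. -/
def scaleE (α : ℝ) (φ : E → EReal) : E → EReal := fun x => ((α : ℝ) : EReal) * φ x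

/-- `h` is locally Lipschitz differentiable on `s`. -/
def LocLipGradOn [CompleteSpace E] (h : E → ℝ) (s : Set E) : Prop :=
  (∀ x ∈ s, DifferentiableAt ℝ h x) ∧
  ∀ x ∈ s, ∃ U ∈ 𝓝 x, ∃ L : ℝ, ∀ u ∈ U ∩ s, ∀ v ∈ U ∩ s,
    ‖gradient h u - gradient h v‖ ≤ L * ‖u - v‖

/-- The numerator `ζ = f + h`. -/
def zeta (f : E → EReal) (h : E → ℝ) (x : E) : EReal := f x + ((h x : ℝ) : EReal)

/-- `η(x,y) = ⟨x,y⟩ − g^*(y)`. -/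
def eta (g : E → ℝ) (x y : E) : EReal := ((⟪x, y⟫ : ℝ) : EReal) - fconj g y

/-- The extended objective of the fractional problem. -/
def Ffun (f : E → EReal) (g h : E → ℝ) (x : E) : EReal :=
  if g x ≠ 0 ∧ f x ≠ ⊤ then ((((f x).toReal + h x) / g x : ℝ) : EReal) else ⊤

/-- The extended objective of the reformulated problem. -/
def Qfun (f : E → EReal) (g h : E → ℝ) (x y : E) : EReal :=
  if f x ≠ ⊤ ∧ 0 < eta g x y then
    ((((f x).toReal + h x) / (eta g x y).toReal : ℝ) : EReal) else ⊤

/-- Pack a pair into the `ℓ²` product space. -/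
def mk2 (x y : E) : WithLp 2 (E × E) := (WithLp.equiv 2 (E × E)).symm (x, y)

def pr1 (p : WithLp 2 (E × E)) : E := (WithLp.equiv 2 (E × E) p).1

def pr2 (p : WithLp 2 (E × E)) : E := (WithLp.equiv 2 (E × E) p).2

/-- `Q` as a function on the `ℓ²` product space. -/
def Qpair (f : E → EReal) (g h : E → ℝ) (p : WithLp 2 (E × E)) : EReal :=
  Qfun f g h (pr1 p) (pr2 p)

/-- The blanket assumptions of the paper. -/
structure Blanket [CompleteSpace E] (f : E → EReal) (g h : E → ℝ) : Prop where
  f_proper : Proper f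
  f_lsc : LowerSemicontinuous f
  f_cont : ContinuousOn f (edom f)
  f_bddBelow : ∃ m : ℝ, ∀ x, (m : EReal) ≤ f x
  h_lsc : LowerSemicontinuous h
  h_diff : LocLipGradOn h {x | g x ≠ 0}
  g_convex : ConvexOn ℝ Set.univ g
  g_nonneg : ∀ x, 0 ≤ g x
  omega_nonempty : ∃ x, g x ≠ 0
  zeta_nonneg : ∀ x, f x ≠ ⊤ → 0 ≤ zeta f h x

/-- `x` is a critical point of `F`: `0 ∈ ∂̂f(x) + ∇h(x) − F(x)·∂g(x)`. -/
def IsCritF [CompleteSpace E] (f : E → EReal) (g h : E → ℝ) (x : E) : Prop :=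
  g x ≠ 0 ∧ f x ≠ ⊤ ∧
  ∃ u ∈ frSubdiff f x, ∃ v ∈ cvxSubdiff g x,
    u + gradient h x - (Ffun f g h x).toReal • v = 0

/-- The level set `X = {x : F(x) ≤ F(x⁰)}`. -/
def lvlSet (f : E → EReal) (g h : E → ℝ) (x0 : E) : Set E :=
  {x | Ffun f g h x ≤ Ffun f g h x0}

/-- The enlargement `X_{α̲}` of the level set. -/
def Xal (f : E → EReal) (g h : E → ℝ) (x0 : E) (αl : ℝ) : Set E :=
  {z | (Metric.infDist z (lvlSet f g h x0)) ^ 2 ≤ sSup (g '' lvlSet f g h x0) / αl}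

/-- The compact set `𝒴 = ∪_{z ∈ X_{α̲}} ∂g(z)`. -/
def Yset (f : E → EReal) (g h : E → ℝ) (x0 : E) (αl : ℝ) : Set E :=
  ⋃ z ∈ Xal f g h x0 αl, cvxSubdiff g z

/-- The set `S = {(x,y) ∈ X × 𝒴 : η(x,y) > 0}`. -/
def Sset (f : E → EReal) (g h : E → ℝ) (x0 : E) (αl : ℝ) : Set (E × E) :=
  {p | p.1 ∈ lvlSet f g h x0 ∧ p.2 ∈ Yset f g h x0 αl ∧ 0 < eta g p.1 p.2}

/-- The set of accumulation points of a sequence. -/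
def accSet {X : Type*} [TopologicalSpace X] (pt : ℕ → X) : Set X :=
  {p | ∃ σ : ℕ → ℕ, StrictMono σ ∧ Tendsto (pt ∘ σ) atTop (𝓝 p)}

/-- A polyhedral function: its epigraph is a finite intersection of closed half-spaces. -/
def IsPolyhedralFn (φ : E → EReal) : Prop :=
  ∃ (m : ℕ) (w : Fin m → E) (c b : Fin m → ℝ),
    ∀ (x : E) (a : ℝ), (φ x ≤ (a : EReal) ↔ ∀ i, ⟪w i, x⟫ + c i * a ≤ b i)


/-- The proximal step on `g^*` stays in `dom Q` and satisfies the descent estimate. -/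
theorem statement11 {n : ℕ} (f : EuclideanSpace ℝ (Fin n) → EReal)
    (g h : EuclideanSpace ℝ (Fin n) → ℝ) (hb : Blanket f g h)
    (x y : EuclideanSpace ℝ (Fin n)) (hdom : Qfun f g h x y ≠ ⊤)
    (α : ℝ) (hα : 0 < α) (yp : EuclideanSpace ℝ (Fin n))
    (hyp : yp ∈ proxSet (scaleE α (fconj g)) (y + α • x)) :
    Qfun f g h x yp ≠ ⊤ ∧
    ∀ c : ℝ, Qfun f g h x y ≤ (c : EReal) →
      zeta f h x + ((c / α * ‖y - yp‖ ^ 2 : ℝ) : EReal) ≤ (c : EReal) * eta g x yp := by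
  obtain ⟨hfx, hη⟩ : f x ≠ ⊤ ∧ 0 < eta g x y := by
    by_contra hC
    rw [Qfun, if_neg hC] at hdom
    exact hdom rfl
  -- fconj g is never ⊥
  have hbot : ∀ w, ((-(g 0) : ℝ) : EReal) ≤ fconj g w := by
    intro w
    have h0 := le_iSup (fun z => (((⟪z, w⟫ : ℝ) : EReal) - ((g z : ℝ) : EReal))) 0
    simpa [fconj, fconjE, inner_zero_left] using h0
  have hφbot : ∀ w, fconj g w ≠ ⊥ := by
    intro w hw
    have := hbot w
    rw [hw, le_bot_iff] at this
    exact EReal.coe_ne_bot _ this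
  have hφy_top : fconj g y ≠ ⊤ := by
    intro htop
    rw [eta, htop] at hη
    simp [EReal.sub_top] at hη
  set gy := (fconj g y).toReal with hgy
  have hφy : fconj g y = (gy : EReal) := (EReal.coe_toReal hφy_top (hφbot y)).symm
  -- finiteness of fconj g yp via the prox inequality at w = y
  set u := y + α • x with hu
  have hproxy := hyp y
  have hφp_top : fconj g yp ≠ ⊤ := by
    intro htop
    rw [scaleE, scaleE, htop, hφy, EReal.mul_top_of_pos (by exact_mod_cast hα)] at hproxy
    rw [← EReal.coe_mul, ← EReal.coe_add, EReal.top_add_of_ne_bot (EReal.coe_ne_bot _)] at hproxy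
    exact (EReal.coe_ne_top _) (top_le_iff.mp hproxy)
  set gp := (fconj g yp).toReal with hgp
  have hφp : fconj g yp = (gp : EReal) := (EReal.coe_toReal hφp_top (hφbot yp)).symm
  -- pointwise conjugate bounds
  have hpt : ∀ w : EuclideanSpace ℝ (Fin n), fconj g w ≠ ⊤ →
      ∀ z, ⟪z, w⟫ - g z ≤ (fconj g w).toReal := by
    intro w hw z
    have h0 := le_iSup (fun z => (((⟪z, w⟫ : ℝ) : EReal) - ((g z : ℝ) : EReal))) z
    rw [← EReal.coe_sub] at h0
    have : ((⟪z, w⟫ - g z : ℝ) : EReal) ≤ (((fconj g w).toReal : ℝ) : EReal) := by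
      rw [EReal.coe_toReal hw (hφbot w)]; exact h0
    exact_mod_cast this
  -- the strong prox inequality, parametrized
  have hstep : ∀ t : ℝ, 0 < t → t ≤ 1 →
      α * (gp - gy) ≤ ⟪yp - u, y - yp⟫ + t / 2 * ‖y - yp‖ ^ 2 := by
    intro t ht ht1
    set w := yp + t • (y - yp) with hw
    have hconv : fconj g w ≤ (((1 - t) * gp + t * gy : ℝ) : EReal) := by
      rw [fconj, fconjE]
      apply iSup_le
      intro z
      rw [← EReal.coe_sub, EReal.coe_le_coe_iff]
      have h1 := hpt yp hφp_top z
      have h2 := hpt y hφy_top z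
      have hin : ⟪z, w⟫ = ⟪z, yp⟫ + t * (⟪z, y⟫ - ⟪z, yp⟫) := by
        simp [hw, inner_add_right, inner_smul_right, inner_sub_right]
      rw [hin]
      nlinarith [mul_nonneg (sub_nonneg.mpr ht1) (sub_nonneg.mpr h1),
        mul_nonneg ht.le (sub_nonneg.mpr h2)]
    have hgw_top : fconj g w ≠ ⊤ := by
      intro htop; rw [htop] at hconv; exact (EReal.coe_ne_top _) (top_le_iff.mp hconv)
    have hgwle : (fconj g w).toReal ≤ (1 - t) * gp + t * gy := by
      have := hconv
      rw [(EReal.coe_toReal hgw_top (hφbot w)).symm, EReal.coe_le_coe_iff] at this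
      exact this
    have hprox := hyp w
    rw [scaleE, scaleE, hφp, (EReal.coe_toReal hgw_top (hφbot w)).symm,
      ← EReal.coe_mul, ← EReal.coe_mul, ← EReal.coe_add, ← EReal.coe_add,
      EReal.coe_le_coe_iff] at hprox
    have hwu : w - u = (yp - u) + t • (y - yp) := by rw [hw]; abel
    have hnorm : ‖w - u‖ ^ 2 =
        ‖yp - u‖ ^ 2 + 2 * (t * ⟪yp - u, y - yp⟫) + t ^ 2 * ‖y - yp‖ ^ 2 := by
      rw [hwu, @norm_add_sq_real, real_inner_smul_right, norm_smul]
      rw [Real.norm_eq_abs, abs_of_pos ht]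
      ring
    rw [hnorm] at hprox
    have hmul : t * (α * (gp - gy)) ≤ t * (⟪yp - u, y - yp⟫ + t / 2 * ‖y - yp‖ ^ 2) := by
      nlinarith [mul_le_mul_of_nonneg_left hgwle hα.le]
    exact le_of_mul_le_mul_left hmul ht
  -- pass to the limit t → 0
  have hlim : α * (gp - gy) ≤ ⟪yp - u, y - yp⟫ := by
    by_contra hlt
    push_neg at hlt
    set B := ‖y - yp‖ ^ 2 with hB
    have hB0 : 0 ≤ B := by positivity
    set gap := α * (gp - gy) - ⟪yp - u, y - yp⟫ with hgap
    have hgap0 : 0 < gap := by rw [hgap]; linarith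
    rcases eq_or_lt_of_le hB0 with hB0' | hBpos
    · have := hstep 1 one_pos le_rfl
      rw [← hB0'] at this
      simp only [mul_zero] at this
      linarith
    · have ht := hstep (min 1 (gap / B)) (lt_min one_pos (by positivity)) (min_le_left _ _)
      have h1 : min 1 (gap / B) ≤ gap / B := min_le_right _ _
      have h2 : min 1 (gap / B) * B ≤ gap := by
        rw [← le_div_iff₀ hBpos] at *; exact h1
      nlinarith
  -- rewrite the inner product
  have hinner : ⟪yp - u, y - yp⟫ = -‖y - yp‖ ^ 2 - α * ⟪x, y - yp⟫ := by
    have : yp - u = -(y - yp) - α • x := by rw [hu]; abel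
    rw [this, inner_sub_left, inner_neg_left, real_inner_smul_left,
      real_inner_self_eq_norm_sq]
  have hkey : α * gp + ‖y - yp‖ ^ 2 + α * (⟪x, y⟫ - ⟪x, yp⟫) ≤ α * gy := by
    have h4 : (⟪x, y - yp⟫ : ℝ) = ⟪x, y⟫ - ⟪x, yp⟫ := inner_sub_right x y yp
    rw [hinner, h4] at hlim
    linarith
  set ey := ⟪x, y⟫ - gy with hey
  set ep := ⟪x, yp⟫ - gp with hep
  have heta_y : eta g x y = (ey : EReal) := by rw [eta, hφy, ← EReal.coe_sub]
  have heta_yp : eta g x yp = (ep : EReal) := by rw [eta, hφp, ← EReal.coe_sub]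
  have hey_pos : 0 < ey := by rw [heta_y] at hη; exact_mod_cast hη
  have hstep' : α * ey + ‖y - yp‖ ^ 2 ≤ α * ep := by
    simp only [hey, hep]; nlinarith [hkey]
  have hep_pos : 0 < ep := by nlinarith
  constructor
  · rw [Qfun, if_pos ⟨hfx, by rw [heta_yp]; exact_mod_cast hep_pos⟩]
    exact EReal.coe_ne_top _
  · intro c hc
    set ζr := (f x).toReal + h x with hζr
    have hfr : f x = (((f x).toReal : ℝ) : EReal) := (EReal.coe_toReal hfx (hb.f_proper.2 x)).symm
    have hζ : zeta f h x = (ζr : EReal) := by rw [zeta, hfr, ← EReal.coe_add]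
    have hζ0 : 0 ≤ ζr := by
      have := hb.zeta_nonneg x hfx
      rw [hζ] at this; exact_mod_cast this
    rw [Qfun, if_pos ⟨hfx, hη⟩, heta_y, EReal.toReal_coe, EReal.coe_le_coe_iff] at hc
    have hc0 : 0 ≤ c := le_trans (div_nonneg hζ0 hey_pos.le) hc
    have hζle : ζr ≤ c * ey := (div_le_iff₀ hey_pos).mp hc
    rw [hζ, heta_yp, ← EReal.coe_mul, ← EReal.coe_add, EReal.coe_le_coe_iff]
    have hfin : ζr + c / α * ‖y - yp‖ ^ 2 ≤ c * ep := by
      have h5 : α * (ζr + c / α * ‖y - yp‖ ^ 2) ≤ α * (c * ep) := by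
        have h6 : α * (c / α * ‖y - yp‖ ^ 2) = c * ‖y - yp‖ ^ 2 := by
          field_simp
        rw [mul_add, h6]
        have h7 := mul_le_mul_of_nonneg_left hstep' hc0
        have h8 := mul_le_mul_of_nonneg_left hζle hα.le
        nlinarith
      exact (mul_le_mul_iff_of_pos_left hα).mp h5
    exact hfin
end Paper
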